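/- Let ψ₀ : ℝ → ℝ be convex and suppose that ∫ |ψ₀(η)| φ(η; m, ν²) dη < ∞ for every m ∈ ℝ and every ν > 0. Then the function (m, ν) ↦ Ψ₀(m, ν) = ∫ ψ₀(η) φ(η; m, ν²) dη is jointly convex in (m, ν) on ℝ × (0, ∞). -/

import Mathlib

open MeasureTheory Real Filter

/-- Gaussian density with mean `m` and variance `ν ^ 2`, evaluated at `x`:
`φ(x; m, ν²) = (2πν²)^{-1/2} exp(−(x−m)²/(2ν²))`. -/
noncomputable def gpdf (m ν x : ℝ) : ℝ :=
  (Real.sqrt (2 * Real.pi * ν ^ 2))⁻¹ * Real.exp (-((x - m) ^ 2) / (2 * ν ^ 2))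

/-- Gaussian cumulative distribution function with mean `m` and variance `ν ^ 2`:
`Φ(c; m, ν²) = ∫_{−∞}^{c} φ(η; m, ν²) dη`. -/
noncomputable def gcdf (m ν c : ℝ) : ℝ := ∫ x in Set.Iio c, gpdf m ν x

lemma gpdf_nonneg (m ν x : ℝ) : 0 ≤ gpdf m ν x := by
  unfold gpdf; positivity

lemma gpdf_continuous (m ν : ℝ) : Continuous (gpdf m ν) := by
  unfold gpdf; fun_prop

lemma gpdf_scale {ν : ℝ} (hν : 0 < ν) (m z : ℝ) :
    ν * gpdf m ν (m + ν * z) = gpdf 0 1 z := by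
  unfold gpdf
  have h1 : Real.sqrt (2 * Real.pi * ν ^ 2) = Real.sqrt (2 * Real.pi * 1 ^ 2) * ν := by
    rw [show 2 * Real.pi * ν ^ 2 = (2 * Real.pi * 1 ^ 2) * ν ^ 2 by ring,
      Real.sqrt_mul (by positivity), Real.sqrt_sq hν.le]
  have h2 : -(m + ν * z - m) ^ 2 / (2 * ν ^ 2) = -(z - 0) ^ 2 / (2 * 1 ^ 2) := by
    field_simp; ring
  rw [h1, h2, mul_inv]
  have hs : (Real.sqrt (2 * Real.pi * 1 ^ 2))⁻¹ * ν⁻¹ * Real.exp (-(z - 0) ^ 2 / (2 * 1 ^ 2)) =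
      ν⁻¹ * ((Real.sqrt (2 * Real.pi * 1 ^ 2))⁻¹ * Real.exp (-(z - 0) ^ 2 / (2 * 1 ^ 2))) := by
    ring
  rw [hs, ← mul_assoc, mul_inv_cancel₀ hν.ne', one_mul]

lemma cov (f : ℝ → ℝ) {m ν : ℝ} (hν : 0 < ν) :
    ∫ η, f η * gpdf m ν η = ∫ z, f (m + ν * z) * gpdf 0 1 z := by
  set g := fun η => f η * gpdf m ν η with hg
  have h1 : (fun z => f (m + ν * z) * gpdf 0 1 z)
      = fun z => ν * g (m + ν * z) := by
    funext z
    rw [← gpdf_scale hν m z, hg]; ring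
  rw [h1, MeasureTheory.integral_const_mul]
  have h2 : ∫ z, g (m + ν * z) = |ν⁻¹| • ∫ y, g (m + y) :=
    MeasureTheory.Measure.integral_comp_mul_left (fun x => g (m + x)) ν
  rw [h2, MeasureTheory.integral_add_left_eq_self g m, smul_eq_mul,
    abs_of_pos (inv_pos.mpr hν), ← mul_assoc, mul_inv_cancel₀ hν.ne', one_mul]

lemma integrable_abs_cov (ψ₀ : ℝ → ℝ)
    (hint : ∀ m ν : ℝ, 0 < ν → Integrable (fun η => |ψ₀ η| * gpdf m ν η))
    {m ν : ℝ} (hν : 0 < ν) :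
    Integrable (fun z => |ψ₀ (m + ν * z)| * gpdf 0 1 z) := by
  have h0 : Integrable (fun η => |ψ₀ η| * gpdf m ν η) := hint m ν hν
  have h1 := (((h0.comp_add_left m).comp_mul_left' hν.ne').const_mul ν)
  have h2 : (fun z => |ψ₀ (m + ν * z)| * gpdf 0 1 z)
      = fun z => ν * (|ψ₀ (m + ν * z)| * gpdf m ν (m + ν * z)) := by
    funext z; rw [← gpdf_scale hν m z]; ring
  rw [h2]; exact h1

lemma integrable_cov (ψ₀ : ℝ → ℝ) (hψ : Continuous ψ₀)
    (hint : ∀ m ν : ℝ, 0 < ν → Integrable (fun η => |ψ₀ η| * gpdf m ν η))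
    {m ν : ℝ} (hν : 0 < ν) :
    Integrable (fun z => ψ₀ (m + ν * z) * gpdf 0 1 z) := by
  refine (integrable_abs_cov ψ₀ hint (m := m) hν).mono' ?_ ?_
  · exact ((hψ.comp (by continuity)).mul (gpdf_continuous 0 1)).aestronglyMeasurable
  · filter_upwards with z
    rw [Real.norm_eq_abs, abs_mul, abs_of_nonneg (gpdf_nonneg 0 1 z)]

theorem psi0_convex (ψ₀ : ℝ → ℝ) (hconv : ConvexOn ℝ Set.univ ψ₀)
    (hint : ∀ m ν : ℝ, 0 < ν → Integrable (fun η => |ψ₀ η| * gpdf m ν η)) :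
    ConvexOn ℝ (Set.univ ×ˢ Set.Ioi (0 : ℝ))
      (fun p : ℝ × ℝ => ∫ η, ψ₀ η * gpdf p.1 p.2 η) := by
  have hψc : Continuous ψ₀ := by
    rw [← continuousOn_univ]
    exact hconv.continuousOn isOpen_univ
  refine ⟨convex_univ.prod (convex_Ioi 0), ?_⟩
  intro p hp q hq a b ha hb hab
  have hp2 : 0 < p.2 := hp.2
  have hq2 : 0 < q.2 := hq.2
  have hr2 : 0 < a * p.2 + b * q.2 := by
    rcases eq_or_lt_of_le ha with h | h
    · have hb1 : b = 1 := by linarith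
      simp [← h, hb1, hq2]
    · have := mul_pos h hp2
      have := mul_nonneg hb hq2.le
      linarith
  have hfst : (a • p + b • q).1 = a * p.1 + b * q.1 := by simp [Prod.smul_fst]
  have hsnd : (a • p + b • q).2 = a * p.2 + b * q.2 := by simp [Prod.smul_snd]
  simp only [hfst, hsnd, smul_eq_mul]
  rw [cov ψ₀ hr2, cov ψ₀ hp2, cov ψ₀ hq2]
  have hip := integrable_cov ψ₀ hψc hint hp2 (m := p.1)
  have hiq := integrable_cov ψ₀ hψc hint hq2 (m := q.1)
  have hir := integrable_cov ψ₀ hψc hint hr2 (m := a * p.1 + b * q.1)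
  rw [← MeasureTheory.integral_const_mul a, ← MeasureTheory.integral_const_mul b,
    ← MeasureTheory.integral_add (hip.const_mul a) (hiq.const_mul b)]
  refine MeasureTheory.integral_mono hir ((hip.const_mul a).add (hiq.const_mul b)) ?_
  intro z
  have key := hconv.2 (Set.mem_univ (p.1 + p.2 * z)) (Set.mem_univ (q.1 + q.2 * z)) ha hb hab
  simp only [smul_eq_mul] at key
  have harg : a * p.1 + b * q.1 + (a * p.2 + b * q.2) * z
      = a * (p.1 + p.2 * z) + b * (q.1 + q.2 * z) := by ring
  calc ψ₀ (a * p.1 + b * q.1 + (a * p.2 + b * q.2) * z) * gpdf 0 1 z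
      ≤ (a * ψ₀ (p.1 + p.2 * z) + b * ψ₀ (q.1 + q.2 * z)) * gpdf 0 1 z := by
        apply mul_le_mul_of_nonneg_right _ (gpdf_nonneg 0 1 z)
        rw [harg]; exact key
    _ = a * (ψ₀ (p.1 + p.2 * z) * gpdf 0 1 z) + b * (ψ₀ (q.1 + q.2 * z) * gpdf 0 1 z) := by ring
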